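/- Assume {1,…,N} is spanning. Let Φ := min{ Σᵢ |βᵢ| : β ∈ ℝ^N, Σᵢ βᵢ·cᵢ = e₁ } (the minimum over all linear representations of e₁ by the signal vectors; it is attained). Then the infimum of V*(λ) over λ ∈ Δ equals Φ², and moreover Φ equals the minimum of φ(S) over all minimally spanning subsets S of {1,…,N}. -/

import Mathlib

open Matrix Finset Filter Topology

noncomputable section

namespace LearningTraps

variable {K N : ℕ}

/-- The information matrix `Σᵢ qᵢ · cᵢ cᵢᵀ`. -/
def infoMat (c : Fin N → Fin K → ℝ) (q : Fin N → ℝ) : Matrix (Fin K) (Fin K) ℝ :=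
  ∑ i, q i • Matrix.vecMulVec (c i) (c i)

/-- Posterior variance `V_Σ(q) = [(Σ⁻¹ + Σᵢ qᵢ cᵢcᵢᵀ)⁻¹]₁₁`. -/
def postVar (hK : 0 < K) (c : Fin N → Fin K → ℝ)
    (Cov : Matrix (Fin K) (Fin K) ℝ) (q : Fin N → ℝ) : ℝ :=
  (Cov⁻¹ + infoMat c q)⁻¹ ⟨0, hK⟩ ⟨0, hK⟩

/-- Posterior variance at integer signal counts. -/
def pv (hK : 0 < K) (c : Fin N → Fin K → ℝ)
    (Cov : Matrix (Fin K) (Fin K) ℝ) (q : Fin N → ℕ) : ℝ :=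
  postVar hK c Cov fun i => (q i : ℝ)

/-- First standard basis vector of `ℝ^K`. -/
def e1 (hK : 0 < K) : Fin K → ℝ := Pi.single ⟨0, hK⟩ 1

/-- `S` is spanning: `e₁` lies in the span of `{cᵢ : i ∈ S}`. -/
def Spanning (hK : 0 < K) (c : Fin N → Fin K → ℝ) (S : Finset (Fin N)) : Prop :=
  e1 hK ∈ Submodule.span ℝ (c '' ↑S)

/-- `S` is minimally spanning. -/
def MinSpanning (hK : 0 < K) (c : Fin N → Fin K → ℝ) (S : Finset (Fin N)) : Prop :=
  Spanning hK c S ∧ ∀ T ⊂ S, ¬ Spanning hK c T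

/-- `β` represents `e₁` using only signals in `S`. -/
def IsRep (hK : 0 < K) (c : Fin N → Fin K → ℝ) (S : Finset (Fin N)) (β : Fin N → ℝ) : Prop :=
  (∀ i ∉ S, β i = 0) ∧ ∑ i, β i • c i = e1 hK

open Classical in
/-- The coefficients `β^S` (unique when `S` is minimally spanning). -/
def betaVec (hK : 0 < K) (c : Fin N → Fin K → ℝ) (S : Finset (Fin N)) : Fin N → ℝ :=
  if h : ∃ β, IsRep hK c S β then h.choose else 0

/-- `φ(S) = Σ_{i∈S} |β^S_i|`. -/
def phi (hK : 0 < K) (c : Fin N → Fin K → ℝ) (S : Finset (Fin N)) : ℝ :=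
  ∑ i, |betaVec hK c S i|

/-- The frequency vector `λ^S`. -/
def freq (hK : 0 < K) (c : Fin N → Fin K → ℝ) (S : Finset (Fin N)) : Fin N → ℝ :=
  fun i => |betaVec hK c S i| / phi hK c S

/-- The Unique Minimizer assumption: `Sstar` is the unique minimizer of `φ`
among minimally spanning sets. -/
def UniqueMin (hK : 0 < K) (c : Fin N → Fin K → ℝ) (Sstar : Finset (Fin N)) : Prop :=
  MinSpanning hK c Sstar ∧
    ∀ S, MinSpanning hK c S → S ≠ Sstar → phi hK c Sstar < phi hK c S

/-- A `t`-optimal division of observations. -/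
def TOptimal (hK : 0 < K) (c : Fin N → Fin K → ℝ) (Cov : Matrix (Fin K) (Fin K) ℝ)
    (t : ℕ) (q : Fin N → ℕ) : Prop :=
  (∑ i, q i) = t ∧ ∀ q' : Fin N → ℕ, (∑ i, q' i) = t → pv hK c Cov q ≤ pv hK c Cov q'

/-- A greedy (myopic) acquisition sequence. -/
def Greedy (hK : 0 < K) (c : Fin N → Fin K → ℝ) (Cov : Matrix (Fin K) (Fin K) ℝ)
    (m : ℕ → Fin N → ℕ) : Prop :=
  m 0 = 0 ∧ ∀ t, ∃ i, m (t + 1) = m t + Pi.single i 1 ∧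
    ∀ j, pv hK c Cov (m t + Pi.single i 1) ≤ pv hK c Cov (m t + Pi.single j 1)

open Classical in
/-- The set `A̅` of all signals whose coefficient vector lies in the span of `{cⱼ : j ∈ A}`. -/
def subClosure (c : Fin N → Fin K → ℝ) (A : Finset (Fin N)) : Finset (Fin N) :=
  Finset.univ.filter fun i => c i ∈ Submodule.span ℝ (c '' ↑A)

/-- `S` is subspace-optimal: it uniquely minimizes `φ` among minimally spanning subsets
of its own subspace closure. -/
def SubspaceOptimal (hK : 0 < K) (c : Fin N → Fin K → ℝ) (S : Finset (Fin N)) : Prop :=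
  MinSpanning hK c S ∧
    ∀ T ⊆ subClosure c S, MinSpanning hK c T → T ≠ S → phi hK c S < phi hK c T

/-- The asymptotic posterior variance `V*`, valued in `[0,∞]`. -/
def Vstar (hK : 0 < K) (c : Fin N → Fin K → ℝ) (l : Fin N → ℝ) : ENNReal :=
  ⨆ (ε : ℝ) (_ : 0 < ε),
    ENNReal.ofReal ((infoMat c l + ε • (1 : Matrix (Fin K) (Fin K) ℝ))⁻¹ ⟨0, hK⟩ ⟨0, hK⟩)


lemma dotProduct_sum' (x : Fin K → ℝ) (f : Fin N → Fin K → ℝ) :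
    x ⬝ᵥ ∑ i, f i = ∑ i, x ⬝ᵥ f i := by
  simp [dotProduct, Finset.sum_apply, Finset.mul_sum]
  exact Finset.sum_comm

lemma infoMat_mulVec (c : Fin N → Fin K → ℝ) (l : Fin N → ℝ) (x : Fin K → ℝ) :
    infoMat c l *ᵥ x = ∑ i, (l i * (c i ⬝ᵥ x)) • c i := by
  ext j
  simp only [infoMat, mulVec, dotProduct, Finset.sum_apply, Pi.smul_apply, smul_eq_mul,
    Matrix.sum_apply, Matrix.smul_apply, vecMulVec_apply, Finset.sum_mul, Finset.mul_sum]
  rw [Finset.sum_comm]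
  exact Finset.sum_congr rfl fun i _ => Finset.sum_congr rfl fun k _ => by ring

lemma dot_infoMat (c : Fin N → Fin K → ℝ) (l : Fin N → ℝ) (x : Fin K → ℝ) :
    x ⬝ᵥ (infoMat c l *ᵥ x) = ∑ i, l i * (c i ⬝ᵥ x) ^ 2 := by
  rw [infoMat_mulVec, dotProduct_sum']
  exact Finset.sum_congr rfl fun i _ => by
    rw [dotProduct_smul, smul_eq_mul, dotProduct_comm]; ring

lemma infoMat_isHermitian (c : Fin N → Fin K → ℝ) (l : Fin N → ℝ) :
    (infoMat c l).IsHermitian := by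
  unfold Matrix.IsHermitian
  ext i j
  simp [infoMat, Matrix.sum_apply, vecMulVec_apply, mul_comm]

/-- `M_ε` is positive definite. -/
lemma Meps_posDef (c : Fin N → Fin K → ℝ) (l : Fin N → ℝ) (hl : ∀ i, 0 ≤ l i)
    {ε : ℝ} (hε : 0 < ε) :
    (infoMat c l + ε • (1 : Matrix (Fin K) (Fin K) ℝ)).PosDef := by
  refine Matrix.posDef_iff_dotProduct_mulVec.2 ⟨?_, ?_⟩
  · have h1 : (infoMat c l + ε • (1 : Matrix (Fin K) (Fin K) ℝ))ᵀ
        = (infoMat c l)ᵀ + (ε • (1 : Matrix (Fin K) (Fin K) ℝ))ᵀ := Matrix.transpose_add _ _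
    have := infoMat_isHermitian c l
    unfold Matrix.IsHermitian at *
    simp only [Matrix.conjTranspose, Matrix.map_add] at *
    ext i j
    simp only [Matrix.add_apply, Matrix.map_apply, Matrix.transpose_apply, Matrix.smul_apply,
      Matrix.one_apply, star_trivial]
    have h2 := congrFun (congrFun this i) j
    simp only [Matrix.map_apply, Matrix.transpose_apply, star_trivial] at h2
    rw [h2]
    by_cases h : j = i
    · simp [h]
    · have h' : i ≠ j := fun hh => h hh.symm
      simp [h, h']
  · intro x hx
    simp only [star_trivial, Matrix.add_mulVec, dotProduct_add, Matrix.smul_mulVec,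
      Matrix.one_mulVec, dotProduct_smul, smul_eq_mul]
    have h1 : 0 ≤ x ⬝ᵥ (infoMat c l *ᵥ x) := by
      rw [dot_infoMat]
      exact Finset.sum_nonneg fun i _ => mul_nonneg (hl i) (sq_nonneg _)
    have h2 : 0 < x ⬝ᵥ x := by
      rcases lt_or_eq_of_le (Finset.sum_nonneg fun i _ => mul_self_nonneg (x i)) with h | h
      · exact h
      · exact absurd (dotProduct_self_eq_zero.1 h.symm) hx
    positivity

lemma mulVec_inv_e1 (hK : 0 < K) {M : Matrix (Fin K) (Fin K) ℝ} (hM : M.PosDef) : M *ᵥ (M⁻¹ *ᵥ e1 hK) = e1 hK := by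
  rw [Matrix.mulVec_mulVec, Matrix.mul_nonsing_inv _ hM.det_pos.ne'.isUnit, Matrix.one_mulVec]

lemma inv_entry_eq (hK : 0 < K) {M : Matrix (Fin K) (Fin K) ℝ} (hM : M.PosDef) :
    M⁻¹ ⟨0, hK⟩ ⟨0, hK⟩
      = 2 * (M⁻¹ *ᵥ e1 hK) ⟨0, hK⟩ - (M⁻¹ *ᵥ e1 hK) ⬝ᵥ (M *ᵥ (M⁻¹ *ᵥ e1 hK)) := by
  set v := M⁻¹ *ᵥ e1 hK with hv
  have h1 : M *ᵥ v = e1 hK := mulVec_inv_e1 hK hM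
  have h2 : v ⬝ᵥ (M *ᵥ v) = v ⟨0, hK⟩ := by
    rw [h1]; simp [e1, dotProduct_single]
  have h3 : v ⟨0, hK⟩ = M⁻¹ ⟨0, hK⟩ ⟨0, hK⟩ := by
    simp [hv, e1, Matrix.mulVec_single]
  rw [h2, h3]; ring

lemma inv_entry_ge (hK : 0 < K) {M : Matrix (Fin K) (Fin K) ℝ} (hM : M.PosDef) (w : Fin K → ℝ) :
    2 * w ⟨0, hK⟩ - w ⬝ᵥ (M *ᵥ w) ≤ M⁻¹ ⟨0, hK⟩ ⟨0, hK⟩ := by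
  set v := M⁻¹ *ᵥ e1 hK with hv
  have h1 : M *ᵥ v = e1 hK := mulVec_inv_e1 hK hM
  have hpos : 0 ≤ (w - v) ⬝ᵥ (M *ᵥ (w - v)) := by
    have := hM.posSemidef.dotProduct_mulVec_nonneg (w - v); simpa using this
  have hsym : ∀ a b : Fin K → ℝ, a ⬝ᵥ (M *ᵥ b) = b ⬝ᵥ (M *ᵥ a) := by
    intro a b
    rw [dotProduct_mulVec, ← Matrix.mulVec_transpose, dotProduct_comm]
    congr 1
    rw [show Mᵀ = M from by simpa [Matrix.IsHermitian] using hM.1]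
  have hwv : w ⬝ᵥ (M *ᵥ v) = w ⟨0, hK⟩ := by rw [h1]; simp [e1, dotProduct_single]
  have hvw : v ⬝ᵥ (M *ᵥ w) = w ⟨0, hK⟩ := by rw [hsym, hwv]
  have hvv : v ⬝ᵥ (M *ᵥ v) = M⁻¹ ⟨0, hK⟩ ⟨0, hK⟩ := by
    rw [h1]; simp [hv, e1, dotProduct_single, Matrix.mulVec_single]
  have hexp : (w - v) ⬝ᵥ (M *ᵥ (w - v))
      = w ⬝ᵥ (M *ᵥ w) - 2 * w ⟨0, hK⟩ + M⁻¹ ⟨0, hK⟩ ⟨0, hK⟩ := by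
    rw [Matrix.mulVec_sub, sub_dotProduct, dotProduct_sub, dotProduct_sub, hwv, hvw, hvv]
    ring
  linarith [hpos, hexp ▸ hpos]

lemma abs_add_abs_sub' (a b : ℝ) (h : |b| ≤ |a|) : |a + b| + |a - b| = 2 * |a| := by
  rcases abs_cases a with ⟨h1, h2⟩ | ⟨h1, h2⟩ <;>
    rcases abs_cases b with ⟨h7, h8⟩ | ⟨h7, h8⟩ <;>
    rcases abs_cases (a + b) with ⟨h3, h4⟩ | ⟨h3, h4⟩ <;>
    rcases abs_cases (a - b) with ⟨h5, h6⟩ | ⟨h5, h6⟩ <;> linarith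

/-- Existence of an ℓ¹-minimizing representation. -/
lemma exists_l1_min (hK : 0 < K) (c : Fin N → Fin K → ℝ) (β₀ : Fin N → ℝ)
    (h₀ : ∑ i, β₀ i • c i = e1 hK) :
    ∃ β : Fin N → ℝ, (∑ i, β i • c i = e1 hK) ∧
      ∀ γ : Fin N → ℝ, (∑ i, γ i • c i = e1 hK) → ∑ i, |β i| ≤ ∑ i, |γ i| := by
  classical
  set f : (Fin N → ℝ) → ℝ := fun β => ∑ i, |β i| with hf
  have hfc : Continuous f := continuous_finset_sum _ fun i _ => (continuous_apply i).abs
  have hgc : Continuous fun β : Fin N → ℝ => ∑ i, β i • c i :=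
    continuous_finset_sum _ fun i _ => (continuous_apply i).smul continuous_const
  set T : Set (Fin N → ℝ) :=
    {β | (∑ i, β i • c i = e1 hK) ∧ f β ≤ f β₀} with hT
  have hTne : T.Nonempty := ⟨β₀, h₀, le_refl _⟩
  have hfnn : ∀ β, 0 ≤ f β := fun β => Finset.sum_nonneg fun i _ => abs_nonneg _
  have hTclosed : IsClosed T := by
    have : T = ((fun β : Fin N → ℝ => ∑ i, β i • c i) ⁻¹' {e1 hK}) ∩ (f ⁻¹' Set.Iic (f β₀)) := by
      ext β; simp [hT, Set.mem_setOf_eq]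
    rw [this]
    exact (isClosed_singleton.preimage hgc).inter (isClosed_Iic.preimage hfc)
  have hTsub : T ⊆ Metric.closedBall 0 (f β₀) := by
    intro β hβ
    rw [Metric.mem_closedBall]
    rw [dist_pi_le_iff (hfnn β₀)]
    intro i
    rw [Real.dist_eq, Pi.zero_apply, sub_zero]
    calc |β i| ≤ f β := Finset.single_le_sum (fun j _ => abs_nonneg (β j)) (Finset.mem_univ i)
    _ ≤ f β₀ := hβ.2
  have hTcompact : IsCompact T :=
    (isCompact_closedBall (0 : Fin N → ℝ) (f β₀)).of_isClosed_subset hTclosed hTsub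
  obtain ⟨β, hβT, hβmin⟩ := hTcompact.exists_isMinOn hTne hfc.continuousOn
  refine ⟨β, hβT.1, fun γ hγ => ?_⟩
  by_cases h : f γ ≤ f β₀
  · exact hβmin ⟨hγ, h⟩
  · exact le_trans hβT.2 (le_of_not_ge h)

/-- Support reduction: if the support of a minimizer is linearly dependent, there is a
minimizer with strictly smaller support. -/
lemma reduce_support (hK : 0 < K) (c : Fin N → Fin K → ℝ) (β γ : Fin N → ℝ)
    (hγ0 : γ ≠ 0) (hsupp : ∀ i, β i = 0 → γ i = 0) (hlin : ∑ i, γ i • c i = 0)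
    (hrep : ∑ i, β i • c i = e1 hK)
    (hmin : ∀ γ' : Fin N → ℝ, (∑ i, γ' i • c i = e1 hK) → ∑ i, |β i| ≤ ∑ i, |γ' i|) :
    ∃ β' : Fin N → ℝ, (∑ i, β' i • c i = e1 hK) ∧ (∑ i, |β' i| = ∑ i, |β i|) ∧
      (∀ i, β i = 0 → β' i = 0) ∧ ∃ i₀, β i₀ ≠ 0 ∧ β' i₀ = 0 := by
  classical
  have hne : (Finset.univ.filter fun i => γ i ≠ 0).Nonempty := by
    by_contra h
    apply hγ0
    ext i
    by_contra hi
    exact h ⟨i, Finset.mem_filter.2 ⟨Finset.mem_univ i, hi⟩⟩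
  obtain ⟨i₀, hi₀mem, hi₀min⟩ :=
    Finset.exists_min_image _ (fun i => |β i / γ i|) hne
  have hγi₀ : γ i₀ ≠ 0 := (Finset.mem_filter.1 hi₀mem).2
  set t : ℝ := -(β i₀ / γ i₀) with ht
  have habs : ∀ i, |t * γ i| ≤ |β i| := by
    intro i
    by_cases hγi : γ i = 0
    · simp [hγi, abs_nonneg]
    · have h1 := hi₀min i (Finset.mem_filter.2 ⟨Finset.mem_univ i, hγi⟩)
      have h2 : |t| ≤ |β i| / |γ i| := by
        rw [ht, abs_neg, ← abs_div]
        exact h1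
      rw [abs_mul]
      calc |t| * |γ i| ≤ (|β i| / |γ i|) * |γ i| :=
        mul_le_mul_of_nonneg_right h2 (abs_nonneg _)
      _ = |β i| := div_mul_cancel₀ _ (abs_ne_zero.2 hγi)
  have hrepA : ∑ i, (β i + t * γ i) • c i = e1 hK := by
    have : ∑ i, (β i + t * γ i) • c i
        = (∑ i, β i • c i) + t • (∑ i, γ i • c i) := by
      rw [Finset.smul_sum, ← Finset.sum_add_distrib]
      exact Finset.sum_congr rfl fun i _ => by
        rw [add_smul, smul_smul]
    rw [this, hlin, smul_zero, add_zero, hrep]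
  have hrepB : ∑ i, (β i - t * γ i) • c i = e1 hK := by
    have : ∑ i, (β i - t * γ i) • c i
        = (∑ i, β i • c i) - t • (∑ i, γ i • c i) := by
      rw [Finset.smul_sum, ← Finset.sum_sub_distrib]
      exact Finset.sum_congr rfl fun i _ => by
        rw [sub_smul, smul_smul]
    rw [this, hlin, smul_zero, sub_zero, hrep]
  have hsum : (∑ i, |β i + t * γ i|) + (∑ i, |β i - t * γ i|) = 2 * ∑ i, |β i| := by
    rw [← Finset.sum_add_distrib, Finset.mul_sum]
    exact Finset.sum_congr rfl fun i _ => abs_add_abs_sub' _ _ (habs i)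
  have hA := hmin _ hrepA
  have hB := hmin _ hrepB
  have heq : ∑ i, |β i + t * γ i| = ∑ i, |β i| := by linarith
  refine ⟨fun i => β i + t * γ i, hrepA, heq, ?_, i₀, ?_, ?_⟩
  · intro i hi
    simp only []
    rw [hi, hsupp i hi, mul_zero, add_zero]
  · intro h
    exact hγi₀ (hsupp i₀ h)
  · simp only []
    rw [ht]
    field_simp
    ring

/-- Spanning sets admit a representation. -/
lemma rep_of_spanning (hK : 0 < K) (c : Fin N → Fin K → ℝ) (S : Finset (Fin N))
    (h : Spanning hK c S) : ∃ β, IsRep hK c S β := by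
  classical
  obtain ⟨l, hl, hrep⟩ := (Finsupp.mem_span_image_iff_linearCombination ℝ).1 h
  refine ⟨fun i => l i, fun i hi => ?_, ?_⟩
  · by_contra hne
    exact hi (by exact_mod_cast hl (Finsupp.mem_support_iff.2 hne))
  · rw [← hrep, Finsupp.linearCombination_apply,
      Finsupp.sum_fintype _ _ fun i => zero_smul ℝ (c i)]
-- span of the sum

lemma spanning_of_rep (hK : 0 < K) (c : Fin N → Fin K → ℝ) (S : Finset (Fin N))
    (β : Fin N → ℝ) (h : IsRep hK c S β) : Spanning hK c S := by
  classical
  rw [Spanning, ← h.2]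
  apply Submodule.sum_mem
  intro i _
  by_cases hi : i ∈ S
  · exact Submodule.smul_mem _ _ (Submodule.subset_span ⟨i, by simpa using hi, rfl⟩)
  · rw [h.1 i hi, zero_smul]; exact Submodule.zero_mem _

/-- There is an ℓ¹-minimizing representation whose support is linearly independent. -/
lemma exists_indep_min (hK : 0 < K) (c : Fin N → Fin K → ℝ) (β₀ : Fin N → ℝ)
    (h₀ : ∑ i, β₀ i • c i = e1 hK) :
    ∃ β : Fin N → ℝ, (∑ i, β i • c i = e1 hK) ∧
      (∀ γ : Fin N → ℝ, (∑ i, γ i • c i = e1 hK) → ∑ i, |β i| ≤ ∑ i, |γ i|) ∧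
      ∀ δ : Fin N → ℝ, (∀ i, β i = 0 → δ i = 0) → (∑ i, δ i • c i = 0) → δ = 0 := by
  classical
  obtain ⟨β, hβrep, hβmin⟩ := exists_l1_min hK c β₀ h₀
  suffices h : ∀ n : ℕ, ∀ β : Fin N → ℝ, (∑ i, β i • c i = e1 hK) →
      (∀ γ : Fin N → ℝ, (∑ i, γ i • c i = e1 hK) → ∑ i, |β i| ≤ ∑ i, |γ i|) →
      (Finset.univ.filter fun i => β i ≠ 0).card = n →
      ∃ β' : Fin N → ℝ, (∑ i, β' i • c i = e1 hK) ∧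
        (∀ γ : Fin N → ℝ, (∑ i, γ i • c i = e1 hK) → ∑ i, |β' i| ≤ ∑ i, |γ i|) ∧
        ∀ δ : Fin N → ℝ, (∀ i, β' i = 0 → δ i = 0) → (∑ i, δ i • c i = 0) → δ = 0 by
    exact h _ β hβrep hβmin rfl
  intro n
  induction n using Nat.strong_induction_on with
  | _ n ih =>
    intro β hrep hmin hcard
    by_cases hind : ∀ δ : Fin N → ℝ, (∀ i, β i = 0 → δ i = 0) → (∑ i, δ i • c i = 0) → δ = 0
    · exact ⟨β, hrep, hmin, hind⟩
    · push_neg at hind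
      obtain ⟨δ, hδsupp, hδlin, hδ0⟩ := hind
      obtain ⟨β', hrep', heq', hsupp', i₀, hi₀, hi₀'⟩ :=
        reduce_support hK c β δ hδ0 hδsupp hδlin hrep hmin
      have hmin' : ∀ γ : Fin N → ℝ, (∑ i, γ i • c i = e1 hK) → ∑ i, |β' i| ≤ ∑ i, |γ i| := by
        intro γ hγ; rw [heq']; exact hmin γ hγ
      have hsub : (Finset.univ.filter fun i => β' i ≠ 0) ⊂ (Finset.univ.filter fun i => β i ≠ 0) := by
        refine Finset.ssubset_iff_of_subset ?_ |>.2 ⟨i₀, ?_, ?_⟩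
        · intro i hi
          simp only [Finset.mem_filter, Finset.mem_univ, true_and] at hi ⊢
          intro hβi
          exact hi (hsupp' i hβi)
        · simp [hi₀]
        · simp [hi₀']
      have hlt : (Finset.univ.filter fun i => β' i ≠ 0).card < n := by
        rw [← hcard]; exact Finset.card_lt_card hsub
      exact ih _ hlt β' hrep' hmin' rfl

lemma betaVec_isRep (hK : 0 < K) (c : Fin N → Fin K → ℝ) (S : Finset (Fin N))
    (h : ∃ β, IsRep hK c S β) : IsRep hK c S (betaVec hK c S) := by
  rw [betaVec, dif_pos h]
  exact h.choose_spec

/-- For a minimizer with independent support, the support is minimally spanning and `phi`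
of the support equals the minimum value. -/
lemma supp_minSpanning (hK : 0 < K) (c : Fin N → Fin K → ℝ) (β : Fin N → ℝ)
    (hrep : ∑ i, β i • c i = e1 hK)
    (hind : ∀ δ : Fin N → ℝ, (∀ i, β i = 0 → δ i = 0) → (∑ i, δ i • c i = 0) → δ = 0) :
    MinSpanning hK c (Finset.univ.filter fun i => β i ≠ 0) ∧
      phi hK c (Finset.univ.filter fun i => β i ≠ 0) = ∑ i, |β i| := by
  classical
  set S := Finset.univ.filter fun i => β i ≠ 0 with hS
  have hmem : ∀ i, i ∈ S ↔ β i ≠ 0 := by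
    intro i; simp [hS]
  have hβrepS : IsRep hK c S β := by
    refine ⟨fun i hi => ?_, hrep⟩
    by_contra h
    exact hi ((hmem i).2 h)
  have hspan : Spanning hK c S := spanning_of_rep hK c S β hβrepS
  have huniq : ∀ γ, IsRep hK c S γ → γ = β := by
    intro γ hγ
    have h1 : ∀ i, β i = 0 → (γ - β) i = 0 := by
      intro i hi
      have : i ∉ S := fun h => ((hmem i).1 h) hi
      simp [hγ.1 i this, hi]
    have h2 : ∑ i, (γ - β) i • c i = 0 := by
      have : ∑ i, (γ - β) i • c i = (∑ i, γ i • c i) - ∑ i, β i • c i := by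
        rw [← Finset.sum_sub_distrib]
        exact Finset.sum_congr rfl fun i _ => by simp [sub_smul]
      rw [this, hγ.2, hrep, sub_self]
    have := hind _ h1 h2
    have : γ - β = 0 := this
    funext i
    have := congrFun this i
    simpa [sub_eq_zero] using this
  constructor
  · constructor
    · exact hspan
    · intro T hT hTspan
      obtain ⟨γ, hγ⟩ := rep_of_spanning hK c T hTspan
      obtain ⟨i₀, hi₀S, hi₀T⟩ := Finset.exists_of_ssubset hT
      have hγS : IsRep hK c S γ := ⟨fun i hi => hγ.1 i fun hmemT => hi (hT.1 hmemT), hγ.2⟩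
      have := huniq γ hγS
      have hβi₀ : β i₀ ≠ 0 := (hmem i₀).1 hi₀S
      rw [← this] at hβi₀
      exact hβi₀ (hγ.1 i₀ hi₀T)
  · have hbv : betaVec hK c S = β := huniq _ (betaVec_isRep hK c S ⟨β, hβrepS⟩)
    rw [phi, hbv]

lemma pi_single_expand (x : Fin K → ℝ) : x = ∑ j, x j • (Pi.single j 1 : Fin K → ℝ) := by
  funext k
  simp only [Finset.sum_apply, Pi.smul_apply, smul_eq_mul]
  rw [Finset.sum_eq_single k]
  · simp
  · intro j _ hj
    rw [Pi.single_eq_of_ne (Ne.symm hj), mul_zero]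
  · simp

/-- Approximate dual vector. -/
lemma exists_dual (hK : 0 < K) (c : Fin N → Fin K → ℝ) (t : ℝ) (ht : 0 < t)
    (h : ∀ β : Fin N → ℝ, (∑ i, β i • c i = e1 hK) → t < ∑ i, |β i|) :
    ∃ u : Fin K → ℝ, (∀ i, |c i ⬝ᵥ u| ≤ 1) ∧ t ≤ u ⟨0, hK⟩ := by
  classical
  set g : (Fin N → ℝ) → (Fin K → ℝ) := fun β => ∑ i, β i • c i with hg
  have hgc : Continuous g :=
    continuous_finset_sum _ fun i _ => (continuous_apply i).smul continuous_const
  set B : Set (Fin N → ℝ) := {β | ∑ i, |β i| ≤ t} with hB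
  set s : Set (Fin K → ℝ) := g '' B with hs
  have hBcomp : IsCompact B := by
    have hfc : Continuous fun β : Fin N → ℝ => ∑ i, |β i| :=
      continuous_finset_sum _ fun i _ => (continuous_apply i).abs
    have hclosed : IsClosed B := isClosed_Iic.preimage hfc
    have hsub : B ⊆ Metric.closedBall 0 t := by
      intro β hβ
      rw [Metric.mem_closedBall, dist_pi_le_iff ht.le]
      intro i
      rw [Real.dist_eq, Pi.zero_apply, sub_zero]
      calc |β i| ≤ ∑ j, |β j| :=
            Finset.single_le_sum (fun j _ => abs_nonneg (β j)) (Finset.mem_univ i)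
      _ ≤ t := hβ
    exact (isCompact_closedBall (0 : Fin N → ℝ) t).of_isClosed_subset hclosed hsub
  have hscomp : IsCompact s := hBcomp.image hgc
  have hsconv : Convex ℝ s := by
    rintro x ⟨βx, hβx, rfl⟩ y ⟨βy, hβy, rfl⟩ a b ha hb hab
    refine ⟨a • βx + b • βy, ?_, ?_⟩
    · calc ∑ i, |(a • βx + b • βy) i| = ∑ i, |a * βx i + b * βy i| := rfl
      _ ≤ ∑ i, (a * |βx i| + b * |βy i|) := by
          apply Finset.sum_le_sum
          intro i _
          calc |a * βx i + b * βy i| ≤ |a * βx i| + |b * βy i| := abs_add_le _ _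
          _ = a * |βx i| + b * |βy i| := by
              rw [abs_mul, abs_mul, abs_of_nonneg ha, abs_of_nonneg hb]
      _ = a * (∑ i, |βx i|) + b * (∑ i, |βy i|) := by
          rw [Finset.sum_add_distrib, Finset.mul_sum, Finset.mul_sum]
      _ ≤ a * t + b * t := by
          exact add_le_add (mul_le_mul_of_nonneg_left hβx ha) (mul_le_mul_of_nonneg_left hβy hb)
      _ = t := by rw [← add_mul, hab, one_mul]
    · simp only [hg]
      rw [Finset.smul_sum, Finset.smul_sum, ← Finset.sum_add_distrib]
      apply Finset.sum_congr rfl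
      intro i _
      simp only [Pi.add_apply, Pi.smul_apply, smul_eq_mul]
      rw [add_smul, smul_smul, smul_smul]
  have he1 : e1 hK ∉ s := by
    rintro ⟨β, hβ, hrep⟩
    exact absurd hβ (not_le.2 (h β hrep))
  obtain ⟨f, u₀, hfs, hfe1⟩ := geometric_hahn_banach_closed_point hsconv hscomp.isClosed he1
  set z : Fin K → ℝ := fun j => f (Pi.single j 1) with hz
  have hfx : ∀ x : Fin K → ℝ, f x = ∑ j, x j * z j := by
    intro x
    conv_lhs => rw [pi_single_expand x]
    rw [map_sum]
    apply Finset.sum_congr rfl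
    intro j _
    rw [f.map_smul, smul_eq_mul]
  have hu₀pos : 0 < u₀ := by
    have h0 : (0 : Fin K → ℝ) ∈ s := ⟨0, by simp [hB, ht.le], by simp [hg]⟩
    have := hfs 0 h0
    simpa using this
  have hfc' : ∀ i, t * |f (c i)| < u₀ := by
    intro i
    have hl1 : ∑ j, |(t • (Pi.single i 1 : Fin N → ℝ)) j| ≤ t := by
      have : ∀ j, |(t • (Pi.single i 1 : Fin N → ℝ)) j| = if j = i then t else 0 := by
        intro j
        by_cases hj : j = i
        · subst hj; simp [abs_of_pos ht]
        · simp [Pi.single_eq_of_ne hj, if_neg hj]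
      rw [Finset.sum_congr rfl fun j _ => this j]
      simp
    have hgp : g (t • (Pi.single i 1 : Fin N → ℝ)) = t • c i := by
      simp only [hg]
      rw [Finset.sum_eq_single i]
      · simp
      · intro j _ hj
        simp [Pi.single_eq_of_ne hj]
      · simp
    have hp : (t • c i : Fin K → ℝ) ∈ s := ⟨_, hl1, hgp⟩
    have hm : (-(t • c i) : Fin K → ℝ) ∈ s := by
      refine ⟨-(t • (Pi.single i 1 : Fin N → ℝ)), ?_, ?_⟩
      · simp only [hB, Set.mem_setOf_eq]
        have habs : ∀ j, |(-(t • (Pi.single i 1 : Fin N → ℝ))) j|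
            = |(t • (Pi.single i 1 : Fin N → ℝ)) j| := fun j => by
          simp only [Pi.neg_apply, abs_neg]
        rw [Finset.sum_congr rfl fun j _ => habs j]
        exact hl1
      · simp only [hg]
        rw [← hgp]
        simp only [hg]
        rw [← Finset.sum_neg_distrib]
        apply Finset.sum_congr rfl
        intro j _
        simp [neg_smul]
    have h1 := hfs _ hp
    have h2 := hfs _ hm
    rw [f.map_smul, smul_eq_mul] at h1
    rw [map_neg, f.map_smul, smul_eq_mul] at h2
    rcases abs_cases (f (c i)) with ⟨hc1, _⟩ | ⟨hc1, _⟩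
    · rw [hc1]; exact h1
    · rw [hc1]; linarith
  have hfcz : ∀ i, c i ⬝ᵥ z = f (c i) := by
    intro i; rw [hfx (c i)]; rfl
  have hfe1z : z ⟨0, hK⟩ = f (e1 hK) := by
    rw [hfx (e1 hK), e1]
    rw [Finset.sum_eq_single (⟨0, hK⟩ : Fin K)]
    · simp
    · intro j _ hj
      rw [Pi.single_eq_of_ne hj, zero_mul]
    · simp
  refine ⟨(t / u₀) • z, fun i => ?_, ?_⟩
  · have hd : c i ⬝ᵥ ((t / u₀) • z) = (t / u₀) * (c i ⬝ᵥ z) := by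
      rw [dotProduct_smul, smul_eq_mul]
    rw [hd, hfcz, abs_mul, abs_of_pos (div_pos ht hu₀pos)]
    rw [div_mul_eq_mul_div, div_le_one hu₀pos]
    exact (hfc' i).le
  · have hv : ((t / u₀) • z) ⟨0, hK⟩ = (t / u₀) * z ⟨0, hK⟩ := rfl
    rw [hv, hfe1z]
    have ht' : t = (t / u₀) * u₀ := by field_simp
    calc t = (t / u₀) * u₀ := ht'
    _ ≤ (t / u₀) * f (e1 hK) :=
        mul_le_mul_of_nonneg_left hfe1.le (div_pos ht hu₀pos).le

lemma dot_Meps (c : Fin N → Fin K → ℝ) (l : Fin N → ℝ) (ε : ℝ) (x : Fin K → ℝ) :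
    x ⬝ᵥ ((infoMat c l + ε • (1 : Matrix (Fin K) (Fin K) ℝ)) *ᵥ x)
      = (∑ i, l i * (c i ⬝ᵥ x) ^ 2) + ε * (x ⬝ᵥ x) := by
  rw [Matrix.add_mulVec, dotProduct_add, dot_infoMat, Matrix.smul_mulVec,
    Matrix.one_mulVec, dotProduct_smul, smul_eq_mul]

lemma ofReal_le_of_forall_sub (a C : ℝ) (hC : 0 ≤ C) (b : ENNReal)
    (h : ∀ ε : ℝ, 0 < ε → ENNReal.ofReal (a - ε * C) ≤ b) : ENNReal.ofReal a ≤ b := by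
  apply ENNReal.le_of_forall_pos_le_add
  intro δ hδ _
  rcases eq_or_lt_of_le hC with hC0 | hC0
  · have : a - 1 * C = a := by rw [← hC0]; ring
    calc ENNReal.ofReal a = ENNReal.ofReal (a - 1 * C) := by rw [this]
    _ ≤ b := h 1 one_pos
    _ ≤ b + δ := le_self_add
  · set ε := (δ : ℝ) / C with hε
    have hεpos : 0 < ε := div_pos (by exact_mod_cast hδ) hC0
    have hεC : ε * C = (δ : ℝ) := by
      rw [hε]; field_simp
    calc ENNReal.ofReal a = ENNReal.ofReal ((a - ε * C) + ε * C) := by ring_nf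
    _ ≤ ENNReal.ofReal (a - ε * C) + ENNReal.ofReal (ε * C) := ENNReal.ofReal_add_le
    _ ≤ b + δ := by
        apply add_le_add (h ε hεpos)
        rw [hεC, ENNReal.ofReal_coe_nnreal]

/-- Lower bound for `V*` on the simplex from a dual vector. -/
lemma Vstar_ge_sq (hK : 0 < K) (c : Fin N → Fin K → ℝ) (l : Fin N → ℝ)
    (hl : ∀ i, 0 ≤ l i) (hsum : ∑ i, l i = 1) (t : ℝ) (ht : 0 < t)
    (u : Fin K → ℝ) (hu : ∀ i, |c i ⬝ᵥ u| ≤ 1) (hu0 : t ≤ u ⟨0, hK⟩) :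
    ENNReal.ofReal (t ^ 2) ≤ Vstar hK c l := by
  set C : ℝ := t ^ 2 * (u ⬝ᵥ u) with hC
  have hCnn : 0 ≤ C := mul_nonneg (sq_nonneg t) (Finset.sum_nonneg fun i _ => mul_self_nonneg _)
  apply ofReal_le_of_forall_sub _ C hCnn
  intro ε hε
  set M := infoMat c l + ε • (1 : Matrix (Fin K) (Fin K) ℝ) with hM
  have hMpd : M.PosDef := Meps_posDef c l hl hε
  set w : Fin K → ℝ := t • u with hw
  have key := inv_entry_ge hK hMpd w
  have hdot : w ⬝ᵥ (M *ᵥ w) = (∑ i, l i * (c i ⬝ᵥ w) ^ 2) + ε * (w ⬝ᵥ w) := dot_Meps c l ε w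
  have hcw : ∀ i, c i ⬝ᵥ w = t * (c i ⬝ᵥ u) := by
    intro i; rw [hw, dotProduct_smul, smul_eq_mul]
  have hsum1 : ∑ i, l i * (c i ⬝ᵥ w) ^ 2 ≤ t ^ 2 := by
    calc ∑ i, l i * (c i ⬝ᵥ w) ^ 2 ≤ ∑ i, l i * t ^ 2 := by
          apply Finset.sum_le_sum
          intro i _
          apply mul_le_mul_of_nonneg_left _ (hl i)
          rw [hcw i, mul_pow]
          have h1 : (c i ⬝ᵥ u) ^ 2 ≤ 1 := by
            nlinarith [hu i, abs_nonneg (c i ⬝ᵥ u), sq_abs (c i ⬝ᵥ u)]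
          nlinarith [sq_nonneg t]
    _ = t ^ 2 := by rw [← Finset.sum_mul, hsum, one_mul]
  have hww : w ⬝ᵥ w = t ^ 2 * (u ⬝ᵥ u) := by
    rw [hw, dotProduct_smul, smul_dotProduct]
    simp [smul_eq_mul]; ring
  have hw0 : w ⟨0, hK⟩ = t * u ⟨0, hK⟩ := rfl
  have hlower : t ^ 2 - ε * C ≤ M⁻¹ ⟨0, hK⟩ ⟨0, hK⟩ := by
    have h2w : 2 * t ^ 2 ≤ 2 * w ⟨0, hK⟩ := by
      rw [hw0]
      nlinarith
    calc t ^ 2 - ε * C = 2 * t ^ 2 - (t ^ 2 + ε * C) := by ring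
    _ ≤ 2 * w ⟨0, hK⟩ - w ⬝ᵥ (M *ᵥ w) := by
        apply sub_le_sub h2w
        rw [hdot, hww, hC]
        exact add_le_add hsum1 (le_refl _)
    _ ≤ M⁻¹ ⟨0, hK⟩ ⟨0, hK⟩ := key
  calc ENNReal.ofReal (t ^ 2 - ε * C) ≤ ENNReal.ofReal (M⁻¹ ⟨0, hK⟩ ⟨0, hK⟩) :=
      ENNReal.ofReal_le_ofReal hlower
  _ ≤ Vstar hK c l := by
      rw [Vstar]
      exact le_iSup₂ (f := fun (ε : ℝ) (_ : 0 < ε) =>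
        ENNReal.ofReal ((infoMat c l + ε • (1 : Matrix (Fin K) (Fin K) ℝ))⁻¹ ⟨0, hK⟩ ⟨0, hK⟩)) ε hε

/-- Upper bound: at the optimal frequencies, `V* ≤ Φ²`. -/
lemma Vstar_le_sq (hK : 0 < K) (c : Fin N → Fin K → ℝ) (β : Fin N → ℝ)
    (hrep : ∑ i, β i • c i = e1 hK) (hpos : 0 < ∑ i, |β i|) :
    Vstar hK c (fun i => |β i| / (∑ j, |β j|)) ≤ ENNReal.ofReal ((∑ i, |β i|) ^ 2) := by
  set Φ : ℝ := ∑ i, |β i| with hΦ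
  set l : Fin N → ℝ := fun i => |β i| / Φ with hl
  have hlnn : ∀ i, 0 ≤ l i := fun i => div_nonneg (abs_nonneg _) hpos.le
  rw [Vstar]
  apply iSup₂_le
  intro ε hε
  apply ENNReal.ofReal_le_ofReal
  set M := infoMat c l + ε • (1 : Matrix (Fin K) (Fin K) ℝ) with hM
  have hMpd : M.PosDef := Meps_posDef c l hlnn hε
  set v : Fin K → ℝ := M⁻¹ *ᵥ e1 hK with hv
  have hkey : M⁻¹ ⟨0, hK⟩ ⟨0, hK⟩ = 2 * v ⟨0, hK⟩ - v ⬝ᵥ (M *ᵥ v) := inv_entry_eq hK hMpd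
  have hdot : v ⬝ᵥ (M *ᵥ v) = (∑ i, l i * (c i ⬝ᵥ v) ^ 2) + ε * (v ⬝ᵥ v) := dot_Meps c l ε v
  have hv0 : v ⟨0, hK⟩ = ∑ i, β i * (c i ⬝ᵥ v) := by
    have h1 : v ⟨0, hK⟩ = v ⬝ᵥ e1 hK := by
      rw [e1, dotProduct_single, mul_one]
    rw [h1, ← hrep]
    rw [show v ⬝ᵥ (∑ i, β i • c i) = ∑ i, v ⬝ᵥ (β i • c i) by
      simp [dotProduct, Finset.sum_apply, Finset.mul_sum]; exact Finset.sum_comm]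
    apply Finset.sum_congr rfl
    intro i _
    rw [dotProduct_smul, smul_eq_mul, dotProduct_comm]
  have hvv : 0 ≤ v ⬝ᵥ v := Finset.sum_nonneg fun i _ => mul_self_nonneg _
  rw [hkey, hdot, hv0]
  have hterm : ∀ i, 2 * (β i * (c i ⬝ᵥ v)) - l i * (c i ⬝ᵥ v) ^ 2 ≤ |β i| * Φ := by
    intro i
    set x : ℝ := c i ⬝ᵥ v
    have hli : l i = |β i| / Φ := rfl
    rw [hli]
    have h1 : 0 ≤ (|β i| + β i) * (Φ - x) ^ 2 :=
      mul_nonneg (by linarith [neg_abs_le (β i)]) (sq_nonneg _)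
    have h2 : 0 ≤ (|β i| - β i) * (Φ + x) ^ 2 :=
      mul_nonneg (by linarith [le_abs_self (β i)]) (sq_nonneg _)
    have h3 : 2 * (β i * x) - |β i| / Φ * x ^ 2 = (2 * (β i * x) * Φ - |β i| * x ^ 2) / Φ := by
      field_simp
    rw [h3, div_le_iff₀ hpos]
    nlinarith [h1, h2]
  calc 2 * (∑ i, β i * (c i ⬝ᵥ v)) - ((∑ i, l i * (c i ⬝ᵥ v) ^ 2) + ε * (v ⬝ᵥ v))
      ≤ 2 * (∑ i, β i * (c i ⬝ᵥ v)) - (∑ i, l i * (c i ⬝ᵥ v) ^ 2) := by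
        nlinarith [mul_nonneg hε.le hvv]
  _ = ∑ i, (2 * (β i * (c i ⬝ᵥ v)) - l i * (c i ⬝ᵥ v) ^ 2) := by
        rw [Finset.sum_sub_distrib, Finset.mul_sum]
  _ ≤ ∑ i, |β i| * Φ := Finset.sum_le_sum fun i _ => hterm i
  _ = Φ ^ 2 := by rw [← Finset.sum_mul, ← hΦ]; ring

/-- If `{1,…,N}` is spanning, the minimum `Φ` of `Σᵢ|βᵢ|` over all
representations `Σᵢ βᵢcᵢ = e₁` is attained; the infimum of `V*` over the simplex is `Φ²`;
and `Φ` is the minimum of `φ` over minimally spanning sets. -/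
theorem Vstar_inf_eq_phi_min {K N : ℕ} (hK : 0 < K) (hN : 0 < N)
    (c : Fin N → Fin K → ℝ) (hspan : Spanning hK c Finset.univ) :
    ∃ Φ : ℝ,
      (∃ β : Fin N → ℝ, (∑ i, β i • c i) = e1 hK ∧ (∑ i, |β i|) = Φ) ∧
      (∀ β : Fin N → ℝ, (∑ i, β i • c i) = e1 hK → Φ ≤ ∑ i, |β i|) ∧
      sInf (Vstar hK c '' {l : Fin N → ℝ | (∀ i, 0 ≤ l i) ∧ (∑ i, l i) = 1}) =
        ENNReal.ofReal (Φ ^ 2) ∧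
      (∃ S : Finset (Fin N), MinSpanning hK c S ∧ phi hK c S = Φ) ∧
      (∀ S : Finset (Fin N), MinSpanning hK c S → Φ ≤ phi hK c S) := by
  classical
  obtain ⟨β₀, hβ₀⟩ := rep_of_spanning hK c Finset.univ hspan
  obtain ⟨β, hrep, hmin, hind⟩ := exists_indep_min hK c β₀ hβ₀.2
  set Φ : ℝ := ∑ i, |β i| with hΦ
  have hΦnn : 0 ≤ Φ := Finset.sum_nonneg fun i _ => abs_nonneg _
  have hΦpos : 0 < Φ := by
    rcases lt_or_eq_of_le hΦnn with h | h
    · exact h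
    · exfalso
      have hb : ∀ i, β i = 0 := by
        intro i
        have := (Finset.sum_eq_zero_iff_of_nonneg fun j _ => abs_nonneg (β j)).1 h.symm i
          (Finset.mem_univ i)
        exact abs_eq_zero.1 this
      have h0 : ∑ i, β i • c i = 0 := by
        apply Finset.sum_eq_zero
        intro i _
        rw [hb i, zero_smul]
      rw [h0] at hrep
      have := congrFun hrep ⟨0, hK⟩
      simp [e1] at this
  obtain ⟨hminspan, hphi⟩ := supp_minSpanning hK c β hrep hind
  have hlower : ∀ l : Fin N → ℝ, (∀ i, 0 ≤ l i) → (∑ i, l i) = 1 →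
      ENNReal.ofReal (Φ ^ 2) ≤ Vstar hK c l := by
    intro l hl1 hl2
    apply le_of_forall_lt
    intro a ha
    have hane : a ≠ ⊤ := ne_top_of_lt (lt_of_lt_of_le ha le_top)
    have har : a.toReal < Φ ^ 2 := by
      rw [← ENNReal.ofReal_toReal hane] at ha
      exact (ENNReal.ofReal_lt_ofReal_iff (by positivity)).1 ha
    set r : ℝ := max a.toReal 0 with hr
    have hrnn : 0 ≤ r := le_max_right _ _
    have hrlt : r < Φ ^ 2 := by
      rw [hr, max_lt_iff]
      exact ⟨har, by positivity⟩
    set t : ℝ := Real.sqrt ((r + Φ ^ 2) / 2) with htdef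
    have htsq : t ^ 2 = (r + Φ ^ 2) / 2 := Real.sq_sqrt (by positivity)
    have htpos : 0 < t := Real.sqrt_pos.2 (by positivity)
    have htΦ : t < Φ := by
      rw [htdef, Real.sqrt_lt' hΦpos]
      linarith
    have hdual : ∃ u : Fin K → ℝ, (∀ i, |c i ⬝ᵥ u| ≤ 1) ∧ t ≤ u ⟨0, hK⟩ := by
      apply exists_dual hK c t htpos
      intro γ hγ
      exact lt_of_lt_of_le htΦ (hmin γ hγ)
    obtain ⟨u, hu1, hu2⟩ := hdual
    have hge := Vstar_ge_sq hK c l hl1 hl2 t htpos u hu1 hu2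
    calc a < ENNReal.ofReal (t ^ 2) := by
          rw [ENNReal.lt_ofReal_iff_toReal_lt hane, htsq]
          calc a.toReal ≤ r := le_max_left _ _
          _ < (r + Φ ^ 2) / 2 := by linarith
    _ ≤ Vstar hK c l := hge
  refine ⟨Φ, ⟨β, hrep, rfl⟩, hmin, ?_, ⟨_, hminspan, hphi⟩, ?_⟩
  · apply le_antisymm
    · have hmem : (fun i => |β i| / Φ) ∈ {l : Fin N → ℝ | (∀ i, 0 ≤ l i) ∧ (∑ i, l i) = 1} := by
        constructor
        · intro i; exact div_nonneg (abs_nonneg _) hΦnn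
        · rw [← Finset.sum_div, ← hΦ, div_self hΦpos.ne']
      calc sInf (Vstar hK c '' {l : Fin N → ℝ | (∀ i, 0 ≤ l i) ∧ (∑ i, l i) = 1})
          ≤ Vstar hK c (fun i => |β i| / Φ) := sInf_le ⟨_, hmem, rfl⟩
      _ ≤ ENNReal.ofReal (Φ ^ 2) := Vstar_le_sq hK c β hrep hΦpos
    · apply le_sInf
      rintro b ⟨l, ⟨hl1, hl2⟩, rfl⟩
      exact hlower l hl1 hl2
  · intro S hS
    have hrepS := betaVec_isRep hK c S (rep_of_spanning hK c S hS.1)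
    rw [phi]
    exact hmin _ hrepS.2

end LearningTraps
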